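/- Let G be a real M × N matrix, let V be a real orthogonal N × N matrix, and let λ_0, …, λ_{N−1} ≥ 0 be such that Gᵀ G = V Λ Vᵀ, where Λ is the diagonal matrix with entries λ_k. Fix Δ > 0 and let D be the diagonal N × N matrix with D_{k,k} := max(0, Δ − λ_k⁻¹) if λ_k > 0 and D_{k,k} := 0 if λ_k = 0 (the water-filling power allocation). Then det(I_M + G·(V D Vᵀ)·Gᵀ) = ∏_{k=0}^{N−1} max(1, Δ·λ_k); equivalently, log₂ det(I_M + G (V D Vᵀ) Gᵀ) = Σ_{k=0}^{N−1} max(0, log₂(Δ·λ_k)). -/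

import Mathlib

open Matrix

set_option autoImplicit false

/-- For the water-filling input covariance `C_xx = V D Vᵀ` built on the
eigendecomposition `Gᵀ G = V Λ Vᵀ` with water level `Δ > 0`,
`det(I + G (V D Vᵀ) Gᵀ) = ∏_k max(1, Δ λ_k)`, equivalently
`log₂ det(I + G (V D Vᵀ) Gᵀ) = Σ_k max(0, log₂(Δ λ_k))`. -/
theorem waterfilling_det_identity
    (M N : ℕ) (G : Matrix (Fin M) (Fin N) ℝ)
    (V : Matrix (Fin N) (Fin N) ℝ)
    (hV : V * Vᵀ = 1 ∧ Vᵀ * V = 1)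
    (lam : Fin N → ℝ) (hlam : ∀ k, 0 ≤ lam k)
    (hGram : Gᵀ * G = V * Matrix.diagonal lam * Vᵀ)
    (Δ : ℝ) (hΔ : 0 < Δ)
    (D : Matrix (Fin N) (Fin N) ℝ)
    (hD : D = Matrix.diagonal (fun k => if 0 < lam k then max 0 (Δ - (lam k)⁻¹) else 0)) :
    ((1 : Matrix (Fin M) (Fin M) ℝ) + G * (V * D * Vᵀ) * Gᵀ).det
        = ∏ k : Fin N, max 1 (Δ * lam k)
    ∧ Real.logb 2 (((1 : Matrix (Fin M) (Fin M) ℝ) + G * (V * D * Vᵀ) * Gᵀ).det)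
        = ∑ k : Fin N, max 0 (Real.logb 2 (Δ * lam k)) := by
  obtain ⟨hV1, hV2⟩ := hV
  have hdet : ((1 : Matrix (Fin M) (Fin M) ℝ) + G * (V * D * Vᵀ) * Gᵀ).det
      = ∏ k : Fin N, max 1 (Δ * lam k) := by
    have h1 : ((1 : Matrix (Fin M) (Fin M) ℝ) + G * (V * D * Vᵀ) * Gᵀ).det
        = ((1 : Matrix (Fin N) (Fin N) ℝ) + (V * D * Vᵀ) * (Gᵀ * G)).det := by
      rw [add_comm, add_comm (1 : Matrix (Fin N) (Fin N) ℝ)]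
      rw [show G * (V * D * Vᵀ) * Gᵀ = G * ((V * D * Vᵀ) * Gᵀ) from Matrix.mul_assoc _ _ _]
      rw [Matrix.det_mul_add_one_comm]
      simp only [Matrix.mul_assoc]
    rw [h1, hGram]
    have h2 : (V * D * Vᵀ) * (V * Matrix.diagonal lam * Vᵀ)
        = V * (D * Matrix.diagonal lam) * Vᵀ := by
      calc (V * D * Vᵀ) * (V * Matrix.diagonal lam * Vᵀ)
          = V * D * (Vᵀ * V) * Matrix.diagonal lam * Vᵀ := by
            simp only [Matrix.mul_assoc]
        _ = V * (D * Matrix.diagonal lam) * Vᵀ := by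
            rw [hV2]; simp only [Matrix.mul_assoc, Matrix.one_mul]
    rw [h2]
    have h3 : (1 : Matrix (Fin N) (Fin N) ℝ) + V * (D * Matrix.diagonal lam) * Vᵀ
        = V * ((1 : Matrix (Fin N) (Fin N) ℝ) + D * Matrix.diagonal lam) * Vᵀ := by
      rw [Matrix.mul_add, Matrix.add_mul, Matrix.mul_one, hV1]
    rw [h3, Matrix.det_mul, Matrix.det_mul]
    have hVdet : V.det * Vᵀ.det = 1 := by
      rw [← Matrix.det_mul, hV1, Matrix.det_one]
    rw [mul_comm V.det, mul_assoc, hVdet, mul_one]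
    rw [hD, Matrix.diagonal_mul_diagonal]
    have : (1 : Matrix (Fin N) (Fin N) ℝ) = Matrix.diagonal (fun _ => (1:ℝ)) := by
      simp
    rw [this, Matrix.diagonal_add, Matrix.det_diagonal]
    apply Finset.prod_congr rfl
    intro k _
    by_cases hk : 0 < lam k
    · simp only [Pi.add_apply, if_pos hk]
      rcases le_or_gt (Δ - (lam k)⁻¹) 0 with h | h
      · rw [max_eq_left h, zero_mul, add_zero]
        have : Δ * lam k ≤ 1 := by
          have := mul_le_mul_of_nonneg_right (show Δ ≤ (lam k)⁻¹ by linarith) (hlam k)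
          rwa [inv_mul_cancel₀ (ne_of_gt hk)] at this
        rw [max_eq_left this]
      · rw [max_eq_right h.le, sub_mul, inv_mul_cancel₀ (ne_of_gt hk)]
        have : 1 < Δ * lam k := by
          have := mul_lt_mul_of_pos_right (show (lam k)⁻¹ < Δ by linarith) hk
          rwa [inv_mul_cancel₀ (ne_of_gt hk)] at this
        rw [max_eq_right this.le]; ring
    · have hk0 : lam k = 0 := le_antisymm (not_lt.mp hk) (hlam k)
      simp [hk0, if_neg hk]
  refine ⟨hdet, ?_⟩
  rw [hdet]
  rw [Real.logb, Real.log_prod (fun k _ => by positivity)]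
  rw [Finset.sum_div]
  apply Finset.sum_congr rfl
  intro k _
  rcases le_or_gt (Δ * lam k) 1 with h | h
  · rw [max_eq_left h]
    rcases eq_or_lt_of_le (mul_nonneg hΔ.le (hlam k)) with h0 | h0
    · simp [← h0, Real.logb]
    · have : Real.logb 2 (Δ * lam k) ≤ 0 := Real.logb_nonpos one_lt_two h0.le h
      rw [max_eq_left this, Real.log_one, zero_div]
  · rw [max_eq_right h.le]
    have : 0 ≤ Real.logb 2 (Δ * lam k) :=
      Real.logb_nonneg one_lt_two h.le
    rw [max_eq_right this, Real.logb]
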